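/- Let p > 2 be a real number and θ ∈ ℝ with θ ≠ 0. Define g : (0,∞) → ℝ by g(ζ) := θ²/(4ζ) + (1 − 2/p)·2^{2/(p−2)}·ζ^{p/(p−2)}. Then ζ̄ := (1/2)·(θ²)^{(p−2)/(2p−2)} is the unique positive solution of the dual algebraic equation θ² = (2ζ)^{(2p−2)/(p−2)}, g is differentiable on (0,∞) with g'(ζ̄) = 0, and ζ̄ is the unique global minimizer of g on (0,∞): g(ζ) > g(ζ̄) for every ζ > 0 with ζ ≠ ζ̄. -/

import Mathlib

/-- Pointwise form of the dual algebraic equation (Lemma 2.6): for `θ ≠ 0`,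
`ζ̄ = (1/2)(θ²)^{(p-2)/(2p-2)}` is the unique positive solution of
`θ² = (2ζ)^{(2p-2)/(p-2)}`, it is a critical point of the dual integrand
`g(ζ) = θ²/(4ζ) + (1-2/p)2^{2/(p-2)}ζ^{p/(p-2)}`, and it is the unique global
minimizer of `g` on `(0,∞)`. -/
theorem dual_algebraic_equation (p : ℝ) (hp : 2 < p) (θ : ℝ) (hθ : θ ≠ 0)
    (g : ℝ → ℝ)
    (hg : ∀ ζ : ℝ, g ζ =
      θ ^ 2 / (4 * ζ) + (1 - 2 / p) * (2:ℝ) ^ (2 / (p - 2)) * ζ ^ (p / (p - 2)))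
    (ζ' : ℝ) (hζ' : ζ' = (θ ^ 2) ^ ((p - 2) / (2 * p - 2)) / 2) :
    (0 < ζ' ∧ θ ^ 2 = (2 * ζ') ^ ((2 * p - 2) / (p - 2)) ∧
      ∀ ζ : ℝ, 0 < ζ → θ ^ 2 = (2 * ζ) ^ ((2 * p - 2) / (p - 2)) → ζ = ζ') ∧
    (∀ ζ : ℝ, 0 < ζ → DifferentiableAt ℝ g ζ) ∧
    deriv g ζ' = 0 ∧
    (∀ ζ : ℝ, 0 < ζ → ζ ≠ ζ' → g ζ' < g ζ) := by
  have hgf : g = fun ζ : ℝ =>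
      θ ^ 2 / (4 * ζ) + (1 - 2 / p) * (2:ℝ) ^ (2 / (p - 2)) * ζ ^ (p / (p - 2)) :=
    funext hg
  subst hgf
  have hT : (0:ℝ) < θ ^ 2 := by positivity
  have hp2 : (0:ℝ) < p - 2 := by linarith
  have hp2' : p - 2 ≠ 0 := ne_of_gt hp2
  have h2p2 : (0:ℝ) < 2 * p - 2 := by linarith
  have h2p2' : 2 * p - 2 ≠ 0 := ne_of_gt h2p2
  have hp0 : p ≠ 0 := by positivity
  have hb : (0:ℝ) < (2 * p - 2) / (p - 2) := div_pos h2p2 hp2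
  have hbne : (2 * p - 2) / (p - 2) ≠ 0 := ne_of_gt hb
  have hζpos : 0 < ζ' := by
    rw [hζ']; positivity
  have h2ζ : 2 * ζ' = (θ ^ 2) ^ ((p - 2) / (2 * p - 2)) := by rw [hζ']; ring
  have hexp : (p - 2) / (2 * p - 2) * ((2 * p - 2) / (p - 2)) = 1 := by
    field_simp
    exact div_self (by linarith)
  have heq : θ ^ 2 = (2 * ζ') ^ ((2 * p - 2) / (p - 2)) := by
    rw [h2ζ, ← Real.rpow_mul hT.le, hexp, Real.rpow_one]
  -- derivative computation
  have hderiv : ∀ x : ℝ, 0 < x →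
      HasDerivAt (fun ζ : ℝ =>
        θ ^ 2 / (4 * ζ) + (1 - 2 / p) * (2:ℝ) ^ (2 / (p - 2)) * ζ ^ (p / (p - 2)))
      (((2 * x) ^ ((2 * p - 2) / (p - 2)) - θ ^ 2) / (4 * x ^ 2)) x := by
    intro x hx
    have h4 : (4:ℝ) * x ≠ 0 := by positivity
    have hd4 : HasDerivAt (fun ζ : ℝ => 4 * ζ) 4 x := by
      simpa using (hasDerivAt_id x).const_mul (4:ℝ)
    have h1 : HasDerivAt (fun ζ : ℝ => θ ^ 2 / (4 * ζ))
        ((0 * (4 * x) - θ ^ 2 * 4) / (4 * x) ^ 2) x :=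
      (hasDerivAt_const x (θ ^ 2)).div hd4 h4
    have h2 : HasDerivAt (fun ζ : ℝ => ζ ^ (p / (p - 2)))
        (p / (p - 2) * x ^ (p / (p - 2) - 1)) x :=
      Real.hasDerivAt_rpow_const (Or.inl hx.ne')
    have h3 := h1.add (h2.const_mul ((1 - 2 / p) * (2:ℝ) ^ (2 / (p - 2))))
    refine h3.congr_deriv ?_
    have e3 : p / (p - 2) - 1 = 2 / (p - 2) := by field_simp; ring
    have ebs : (2 * p - 2) / (p - 2) = 2 / (p - 2) + 2 := by field_simp; ring
    have e1 : (2 * x) ^ ((2 * p - 2) / (p - 2))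
        = (2:ℝ) ^ (2 / (p - 2)) * x ^ (2 / (p - 2)) * (4 * x ^ 2) := by
      rw [ebs, Real.rpow_add (by positivity : (0:ℝ) < 2 * x),
        Real.mul_rpow (by norm_num : (0:ℝ) ≤ 2) hx.le,
        show ((2:ℝ)) = ((2:ℕ):ℝ) by norm_num, Real.rpow_natCast]
      ring
    rw [e1, e3]
    have e2 : (1 - 2 / p) * (2:ℝ) ^ (2 / (p - 2)) * (p / (p - 2) * x ^ (2 / (p - 2)))
        = (2:ℝ) ^ (2 / (p - 2)) * x ^ (2 / (p - 2)) := by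
      have : (1 - 2 / p) * (p / (p - 2)) = 1 := by field_simp
      calc (1 - 2 / p) * (2:ℝ) ^ (2 / (p - 2)) * (p / (p - 2) * x ^ (2 / (p - 2)))
          = ((1 - 2 / p) * (p / (p - 2))) *
            ((2:ℝ) ^ (2 / (p - 2)) * x ^ (2 / (p - 2))) := by ring
        _ = _ := by rw [this]; ring
    rw [e2]
    have hx2 : x ^ 2 ≠ 0 := by positivity
    field_simp
    ring
  refine ⟨⟨hζpos, heq, ?_⟩, ?_, ?_, ?_⟩
  · intro ζ hζ hζe
    have h1 : (2 * ζ) ^ ((2 * p - 2) / (p - 2)) = (2 * ζ') ^ ((2 * p - 2) / (p - 2)) := by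
      rw [← hζe, heq]
    have h2 : 2 * ζ = 2 * ζ' := by
      have a1 := Real.rpow_natCast -- dummy
      have i1 : ((2 * ζ) ^ ((2 * p - 2) / (p - 2))) ^ ((2 * p - 2) / (p - 2))⁻¹ = 2 * ζ :=
        Real.rpow_rpow_inv (by positivity) hbne
      have i2 : ((2 * ζ') ^ ((2 * p - 2) / (p - 2))) ^ ((2 * p - 2) / (p - 2))⁻¹ = 2 * ζ' :=
        Real.rpow_rpow_inv (by positivity) hbne
      rw [← i1, h1, i2]
    linarith
  · intro ζ hζ
    exact (hderiv ζ hζ).differentiableAt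
  · rw [(hderiv ζ' hζpos).deriv, ← heq]
    simp
  · intro ζ hζ hne
    rcases lt_or_gt_of_ne hne with hlt | hgt
    · -- ζ < ζ' : g strictly decreasing on [ζ, ζ']
      have hanti : StrictAntiOn (fun ζ : ℝ =>
          θ ^ 2 / (4 * ζ) + (1 - 2 / p) * (2:ℝ) ^ (2 / (p - 2)) * ζ ^ (p / (p - 2)))
          (Set.Icc ζ ζ') := by
        apply strictAntiOn_of_deriv_neg (convex_Icc _ _)
        · intro y hy
          have hy0 : 0 < y := lt_of_lt_of_le hζ hy.1
          exact (hderiv y hy0).differentiableAt.continuousAt.continuousWithinAt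
        · rw [interior_Icc]
          intro y hy
          have hy0 : 0 < y := lt_trans hζ hy.1
          rw [(hderiv y hy0).deriv]
          apply div_neg_of_neg_of_pos _ (by positivity)
          rw [sub_neg, heq]
          exact Real.rpow_lt_rpow (by positivity) (by linarith [hy.2]) hb
      exact hanti (Set.left_mem_Icc.mpr hlt.le) (Set.right_mem_Icc.mpr hlt.le) hlt
    · have hmono : StrictMonoOn (fun ζ : ℝ =>
          θ ^ 2 / (4 * ζ) + (1 - 2 / p) * (2:ℝ) ^ (2 / (p - 2)) * ζ ^ (p / (p - 2)))
          (Set.Icc ζ' ζ) := by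
        apply strictMonoOn_of_deriv_pos (convex_Icc _ _)
        · intro y hy
          have hy0 : 0 < y := lt_of_lt_of_le hζpos hy.1
          exact (hderiv y hy0).differentiableAt.continuousAt.continuousWithinAt
        · rw [interior_Icc]
          intro y hy
          have hy0 : 0 < y := lt_trans hζpos hy.1
          rw [(hderiv y hy0).deriv]
          apply div_pos _ (by positivity)
          rw [sub_pos, heq]
          exact Real.rpow_lt_rpow (by positivity) (by linarith [hy.1]) hb
      exact hmono (Set.left_mem_Icc.mpr hgt.le) (Set.right_mem_Icc.mpr hgt.le) hgt
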